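/- arXiv:2101.03162 — 4 statements merged into one kernel-verified Lean document; each statement's English description precedes it below -/
import Mathlib

section
/- For every real z ≥ 0: erf(z) = 1 - (2/π) ∫_0^{π/2} exp(-z²/ sin(ψ)²) dψ. -/
set_option maxHeartbeats 1000000
open MeasureTheory Real Filter Set intervalIntegral Topology

lemma sin_pos_mem {ψ : ℝ} (h : ψ ∈ Set.Ioc (0:ℝ) (π/2)) : 0 < Real.sin ψ :=
  Real.sin_pos_of_pos_of_lt_pi h.1 (lt_of_le_of_lt h.2 (by linarith [Real.pi_pos]))

lemma texp_le (t : ℝ) : t * Real.exp (-t) ≤ 1 := by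
  rcases le_or_gt t 0 with h | h
  · have := Real.exp_pos (-t); nlinarith
  · rw [Real.exp_neg, mul_inv_le_iff₀ (Real.exp_pos t), one_mul]
    linarith [Real.add_one_le_exp t]

lemma hbound {z s : ℝ} (hz : 0 < z) (hs : 0 < s) :
    s⁻¹ * Real.exp (-z^2 / s) ≤ (z^2)⁻¹ := by
  have h := texp_le (z^2 / s)
  rw [neg_div]
  have hz2 : (0:ℝ) < z^2 := by positivity
  rw [div_mul_eq_mul_div, div_le_one hs] at h
  rw [inv_mul_le_iff₀ hs]
  rw [mul_comm] at h
  exact ((le_div_iff₀ hz2).mpr h).trans_eq (div_eq_mul_inv _ _)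

lemma h_meas (z : ℝ) : Measurable (fun ψ : ℝ => (Real.sin ψ ^ 2)⁻¹ * Real.exp (-z^2 / Real.sin ψ ^ 2)) := by
  measurability

lemma h_intble {z : ℝ} (hz : 0 < z) :
    IntervalIntegrable (fun ψ => (Real.sin ψ ^ 2)⁻¹ * Real.exp (-z^2 / Real.sin ψ ^ 2))
      volume 0 (π/2) := by
  rw [intervalIntegrable_iff, Set.uIoc_of_le (by positivity : (0:ℝ) ≤ π/2)]
  refine Measure.integrableOn_of_bounded (M := (z^2)⁻¹) measure_Ioc_lt_top.ne
    (h_meas z).aestronglyMeasurable ?_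
  filter_upwards [ae_restrict_mem measurableSet_Ioc] with ψ hψ
  have hs : 0 < Real.sin ψ := sin_pos_mem hψ
  have : 0 < Real.sin ψ ^ 2 := by positivity
  rw [Real.norm_eq_abs, abs_of_nonneg (by positivity)]
  exact hbound hz this

lemma sub_step {z ε : ℝ} (hz : 0 < z) (hε : ε ∈ Set.Ioo (0:ℝ) (π/2)) :
    ∫ ψ in ε..(π/2), (Real.sin ψ ^ 2)⁻¹ * Real.exp (-z^2 / Real.sin ψ ^ 2)
      = Real.exp (-z^2) / z *
        ∫ u in (0:ℝ)..(z * (Real.cos ε / Real.sin ε)), Real.exp (-u^2) := by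
  have hεle : ε ≤ π/2 := hε.2.le
  have huIcc : Set.uIcc ε (π/2) = Set.Icc ε (π/2) := Set.uIcc_of_le hεle
  have hsin : ∀ x ∈ Set.Icc ε (π/2), 0 < Real.sin x := fun x hx =>
    Real.sin_pos_of_pos_of_lt_pi (lt_of_lt_of_le hε.1 hx.1)
      (lt_of_le_of_lt hx.2 (by linarith [Real.pi_pos]))
  have key := intervalIntegral.integral_comp_smul_deriv
    (f := fun ψ => z * (Real.cos ψ / Real.sin ψ)) (f' := fun ψ => -z / Real.sin ψ ^ 2)
    (g := fun u => Real.exp (-z^2) * Real.exp (-u^2)) (a := ε) (b := π/2)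
    (fun x hx => by
      rw [huIcc] at hx
      have hs := hsin x hx
      have hd : HasDerivAt (fun ψ => z * (Real.cos ψ / Real.sin ψ))
          (z * ((-Real.sin x * Real.sin x - Real.cos x * Real.cos x) / Real.sin x ^ 2)) x :=
        (((Real.hasDerivAt_cos x).div (Real.hasDerivAt_sin x) hs.ne')).const_mul z
      convert hd using 1
      have h1 : Real.sin x ^ 2 ≠ 0 := by positivity
      have hpy := Real.sin_sq_add_cos_sq x
      have h2 : -Real.sin x * Real.sin x - Real.cos x * Real.cos x = -1 := by nlinarith
      rw [h2]; ring)
    (by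
      rw [huIcc]
      apply ContinuousOn.div continuousOn_const ((Real.continuous_sin.pow 2).continuousOn)
      intro x hx
      exact pow_ne_zero 2 (hsin x hx).ne')
    (by fun_prop)
  simp only at key
  have hfpi : z * (Real.cos (π/2) / Real.sin (π/2)) = 0 := by simp
  rw [hfpi] at key
  have hcongr : ∀ x ∈ Set.uIcc ε (π/2),
      (fun ψ => -z / Real.sin ψ ^ 2) x •
        ((fun u => Real.exp (-z^2) * Real.exp (-u^2)) ∘ fun ψ => z * (Real.cos ψ / Real.sin ψ)) x
      = (-z) * ((Real.sin x ^ 2)⁻¹ * Real.exp (-z^2 / Real.sin x ^ 2)) := by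
    intro x hx
    rw [huIcc] at hx
    have hs := hsin x hx
    have h1 : Real.sin x ^ 2 ≠ 0 := by positivity
    simp only [Function.comp, smul_eq_mul]
    rw [← Real.exp_add]
    have : -z^2 + -(z * (Real.cos x / Real.sin x))^2 = -z^2 / Real.sin x ^ 2 := by
      field_simp
      nlinarith [Real.sin_sq_add_cos_sq x]
    rw [this]; ring
  rw [intervalIntegral.integral_congr (g := fun x => (-z) * ((Real.sin x ^ 2)⁻¹ * Real.exp (-z^2 / Real.sin x ^ 2))) hcongr] at key
  rw [intervalIntegral.integral_const_mul,
    intervalIntegral.integral_symm 0 (z * (Real.cos ε / Real.sin ε)),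
    intervalIntegral.integral_const_mul] at key
  have hz' : z ≠ 0 := hz.ne'
  rw [div_mul_eq_mul_div, eq_div_iff hz']
  linarith [key]

lemma key_int {z : ℝ} (hz : 0 < z) :
    ∫ ψ in (0:ℝ)..(π/2), (Real.sin ψ ^ 2)⁻¹ * Real.exp (-z^2 / Real.sin ψ ^ 2)
      = Real.sqrt π / (2*z) * Real.exp (-z^2) := by
  have hpi : (0:ℝ) < π/2 := by positivity
  have hev : Set.Ioo (0:ℝ) (π/2) ∈ 𝓝[>] (0:ℝ) :=
    Ioo_mem_nhdsGT hpi
  set h : ℝ → ℝ := fun ψ => (Real.sin ψ ^ 2)⁻¹ * Real.exp (-z^2 / Real.sin ψ ^ 2) with hh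
  -- small piece tends to 0
  have T0 : Tendsto (fun ε => ∫ ψ in (0:ℝ)..ε, h ψ) (𝓝[>] (0:ℝ)) (𝓝 0) := by
    apply squeeze_zero_norm' (a := fun ε => (z^2)⁻¹ * ε)
    · filter_upwards [hev] with ε hε
      have : ∀ x ∈ Set.uIoc (0:ℝ) ε, ‖h x‖ ≤ (z^2)⁻¹ := by
        intro x hx
        rw [Set.uIoc_of_le hε.1.le] at hx
        have hs : 0 < Real.sin x := sin_pos_mem ⟨hx.1, le_trans hx.2 hε.2.le⟩
        have hs2 : 0 < Real.sin x ^ 2 := by positivity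
        rw [hh, Real.norm_eq_abs, abs_of_nonneg (by positivity)]
        exact hbound hz hs2
      calc ‖∫ ψ in (0:ℝ)..ε, h ψ‖ ≤ (z^2)⁻¹ * |ε - 0| :=
            intervalIntegral.norm_integral_le_of_norm_le_const this
        _ = (z^2)⁻¹ * ε := by rw [sub_zero, abs_of_pos hε.1]
    · have : Tendsto (fun ε : ℝ => (z^2)⁻¹ * ε) (𝓝 0) (𝓝 ((z^2)⁻¹ * 0)) :=
        (continuous_const.mul continuous_id).tendsto 0
      simpa using this.mono_left nhdsWithin_le_nhds
  have T1 : Tendsto (fun ε => ∫ ψ in ε..(π/2), h ψ) (𝓝[>] (0:ℝ))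
      (𝓝 (∫ ψ in (0:ℝ)..(π/2), h ψ)) := by
    have heq : ∀ᶠ ε in 𝓝[>] (0:ℝ),
        (∫ ψ in (0:ℝ)..(π/2), h ψ) - (∫ ψ in (0:ℝ)..ε, h ψ) = ∫ ψ in ε..(π/2), h ψ := by
      filter_upwards [hev] with ε hε
      have hsub1 : IntervalIntegrable h volume 0 ε := by
        apply (h_intble hz).mono_set
        rw [Set.uIcc_of_le hε.1.le, Set.uIcc_of_le hpi.le]
        exact Set.Icc_subset_Icc le_rfl hε.2.le
      have hsub2 : IntervalIntegrable h volume ε (π/2) := by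
        apply (h_intble hz).mono_set
        rw [Set.uIcc_of_le hε.2.le, Set.uIcc_of_le hpi.le]
        exact Set.Icc_subset_Icc hε.1.le le_rfl
      have := intervalIntegral.integral_add_adjacent_intervals hsub1 hsub2
      linarith [this]
    have := (tendsto_const_nhds (x := ∫ ψ in (0:ℝ)..(π/2), h ψ) (f := 𝓝[>] (0:ℝ))).sub T0
    rw [sub_zero] at this
    exact Tendsto.congr' heq this
  -- the substitution side
  have Tcot : Tendsto (fun ε => z * (Real.cos ε / Real.sin ε)) (𝓝[>] (0:ℝ)) atTop := by
    apply Tendsto.const_mul_atTop hz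
    have hsin : Tendsto Real.sin (𝓝[>] (0:ℝ)) (𝓝[>] (0:ℝ)) := by
      rw [tendsto_nhdsWithin_iff]
      constructor
      · simpa using (Real.continuous_sin.tendsto 0).mono_left nhdsWithin_le_nhds
      · filter_upwards [hev] with ε hε
        exact sin_pos_mem ⟨hε.1, hε.2.le⟩
    have hinv : Tendsto (fun ε => (Real.sin ε)⁻¹) (𝓝[>] (0:ℝ)) atTop :=
      tendsto_inv_nhdsGT_zero.comp hsin
    have hcos : Tendsto (fun ε => Real.cos ε) (𝓝[>] (0:ℝ)) (𝓝 1) := by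
      simpa using (Real.continuous_cos.tendsto 0).mono_left nhdsWithin_le_nhds
    have := hcos.pos_mul_atTop one_pos hinv
    exact this.congr (fun ε => (div_eq_mul_inv _ _).symm)
  have hgauss_int : IntegrableOn (fun u : ℝ => Real.exp (-u^2)) (Set.Ioi 0) := by
    have h1 : Integrable (fun u : ℝ => Real.exp (-u^2)) := by
      have := integrable_exp_neg_mul_sq (b := 1) one_pos
      simpa using this
    exact h1.integrableOn
  have Tg : Tendsto (fun ε => ∫ u in (0:ℝ)..(z * (Real.cos ε / Real.sin ε)), Real.exp (-u^2))
      (𝓝[>] (0:ℝ)) (𝓝 (Real.sqrt π / 2)) := by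
    have := intervalIntegral_tendsto_integral_Ioi 0 hgauss_int Tcot
    have hval : ∫ x in Set.Ioi (0:ℝ), Real.exp (-x^2) = Real.sqrt π / 2 := by
      have := integral_gaussian_Ioi 1
      simpa using this
    rwa [hval] at this
  have T2 : Tendsto (fun ε => ∫ ψ in ε..(π/2), h ψ) (𝓝[>] (0:ℝ))
      (𝓝 (Real.exp (-z^2) / z * (Real.sqrt π / 2))) := by
    apply Tendsto.congr' _ ((tendsto_const_nhds).mul Tg)
    filter_upwards [hev] with ε hε
    exact (sub_step hz hε).symm
  have := tendsto_nhds_unique T1 T2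
  rw [this]; ring

lemma erf_like_deriv (x : ℝ) :
    HasDerivAt (fun u : ℝ => (2 / Real.sqrt π) * ∫ t in (0:ℝ)..u, Real.exp (-t ^ 2))
      (2 / Real.sqrt π * Real.exp (-x ^ 2)) x := by
  have hc : Continuous fun t : ℝ => Real.exp (-t ^ 2) := by fun_prop
  exact ((hc.integral_hasStrictDerivAt 0 x).hasDerivAt).const_mul _

lemma F_deriv {z : ℝ} (hz : 0 < z) :
    HasDerivAt (fun x => ∫ ψ in (0:ℝ)..(π/2), Real.exp (-x^2 / Real.sin ψ ^ 2))
      (-Real.sqrt π * Real.exp (-z^2)) z := by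
  have hpi : (0:ℝ) < π/2 := by positivity
  have hIoc : Set.uIoc (0:ℝ) (π/2) = Set.Ioc 0 (π/2) := Set.uIoc_of_le hpi.le
  have main := intervalIntegral.hasDerivAt_integral_of_dominated_loc_of_deriv_le
    (F := fun x ψ => Real.exp (-x^2 / Real.sin ψ ^ 2))
    (F' := fun x ψ => -2*x / Real.sin ψ ^ 2 * Real.exp (-x^2 / Real.sin ψ ^ 2))
    (x₀ := z) (a := 0) (b := π/2) (bound := fun _ => 12 / z) (s := Metric.ball z (z/2)) (μ := volume)
    (Metric.ball_mem_nhds z (by positivity))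
    (Filter.Eventually.of_forall fun x => by
      apply Measurable.aestronglyMeasurable; measurability)
    (by
      rw [intervalIntegrable_iff, hIoc]
      refine Measure.integrableOn_of_bounded (M := 1) measure_Ioc_lt_top.ne
        (by apply Measurable.aestronglyMeasurable; measurability) ?_
      filter_upwards [ae_restrict_mem measurableSet_Ioc] with ψ hψ
      have hs : 0 < Real.sin ψ := sin_pos_mem hψ
      rw [Real.norm_eq_abs, abs_of_nonneg (Real.exp_pos _).le, Real.exp_le_one_iff,
        neg_div, neg_nonpos]
      positivity)
    (by apply Measurable.aestronglyMeasurable; measurability)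
    (Filter.Eventually.of_forall fun ψ hψ x hx => by
      rw [hIoc] at hψ
      have hs : 0 < Real.sin ψ := sin_pos_mem hψ
      have hs2 : 0 < Real.sin ψ ^ 2 := by positivity
      rw [Metric.mem_ball, Real.dist_eq, abs_lt] at hx
      have hx1 : z/2 < x := by linarith
      have hx2 : x < 3*z/2 := by linarith
      have hxpos : 0 < x := lt_trans (by positivity) hx1
      have hb1 : Real.exp (-x^2 / Real.sin ψ ^ 2) ≤ Real.exp (-(z/2)^2 / Real.sin ψ ^ 2) := by
        apply Real.exp_le_exp.mpr
        rw [div_le_div_iff_of_pos_right hs2]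
        nlinarith
      have hb2 : (Real.sin ψ ^ 2)⁻¹ * Real.exp (-(z/2)^2 / Real.sin ψ ^ 2) ≤ ((z/2)^2)⁻¹ :=
        hbound (by positivity) hs2
      have hnorm : ‖-2*x / Real.sin ψ ^ 2 * Real.exp (-x^2 / Real.sin ψ ^ 2)‖
          = 2*x * ((Real.sin ψ ^ 2)⁻¹ * Real.exp (-x^2 / Real.sin ψ ^ 2)) := by
        rw [Real.norm_eq_abs, abs_mul, abs_div, abs_of_pos (Real.exp_pos _),
          abs_of_pos hs2]
        rw [abs_of_nonpos (by linarith : -2*x ≤ 0)]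
        ring
      rw [hnorm]
      have : (Real.sin ψ ^ 2)⁻¹ * Real.exp (-x^2 / Real.sin ψ ^ 2) ≤ ((z/2)^2)⁻¹ := by
        refine le_trans ?_ hb2
        exact mul_le_mul_of_nonneg_left hb1 (by positivity)
      calc 2*x * ((Real.sin ψ ^ 2)⁻¹ * Real.exp (-x^2 / Real.sin ψ ^ 2))
          ≤ 2*(3*z/2) * ((z/2)^2)⁻¹ := by
            apply mul_le_mul (by linarith) this (by positivity) (by positivity)
        _ = 12 / z := by field_simp; ring)
    (intervalIntegrable_const)
    (Filter.Eventually.of_forall fun ψ hψ x hx => by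
      rw [hIoc] at hψ
      have hs : 0 < Real.sin ψ := sin_pos_mem hψ
      have hs2 : Real.sin ψ ^ 2 ≠ 0 := by positivity
      have hd : HasDerivAt (fun x : ℝ => -x^2 / Real.sin ψ ^ 2)
          (-(2*x^(2-1)) / Real.sin ψ ^ 2) x := ((hasDerivAt_pow 2 x).neg).div_const _
      have := hd.exp
      refine this.congr_deriv ?_
      rw [show (2:ℕ) - 1 = 1 from rfl, pow_one]
      ring)
  have hval : (∫ ψ in (0:ℝ)..(π/2), -2*z / Real.sin ψ ^ 2 * Real.exp (-z^2 / Real.sin ψ ^ 2))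
      = -Real.sqrt π * Real.exp (-z^2) := by
    have hfe : (fun ψ => -2*z / Real.sin ψ ^ 2 * Real.exp (-z^2 / Real.sin ψ ^ 2))
        = fun ψ => (-2*z) * ((Real.sin ψ ^ 2)⁻¹ * Real.exp (-z^2 / Real.sin ψ ^ 2)) := by
      funext ψ; ring
    rw [hfe, intervalIntegral.integral_const_mul, key_int hz]
    field_simp
  rw [hval] at main
  exact main.2

lemma F_cont0 : Tendsto (fun x : ℝ => ∫ ψ in (0:ℝ)..(π/2), Real.exp (-x^2 / Real.sin ψ ^ 2))
    (𝓝[>] (0:ℝ)) (𝓝 (π/2)) := by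
  have hpi : (0:ℝ) < π/2 := by positivity
  have hIoc : Set.uIoc (0:ℝ) (π/2) = Set.Ioc 0 (π/2) := Set.uIoc_of_le hpi.le
  have hmain := intervalIntegral.tendsto_integral_filter_of_dominated_convergence
    (μ := volume) (a := 0) (b := π/2) (F := fun x ψ => Real.exp (-x^2 / Real.sin ψ ^ 2))
    (f := fun _ => (1:ℝ)) (bound := fun _ => (1:ℝ)) (l := 𝓝[>] (0:ℝ))
    (Filter.Eventually.of_forall fun x => by
      apply Measurable.aestronglyMeasurable; measurability)
    (Filter.Eventually.of_forall fun x => Filter.Eventually.of_forall fun ψ hψ => by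
      rw [hIoc] at hψ
      have hs : 0 < Real.sin ψ := sin_pos_mem hψ
      rw [Real.norm_eq_abs, abs_of_nonneg (Real.exp_pos _).le, Real.exp_le_one_iff,
        neg_div, neg_nonpos]
      positivity)
    (intervalIntegrable_const)
    (Filter.Eventually.of_forall fun ψ hψ => by
      rw [hIoc] at hψ
      have hs : 0 < Real.sin ψ := sin_pos_mem hψ
      have hs2 : Real.sin ψ ^ 2 ≠ 0 := by positivity
      have hc : ContinuousAt (fun x : ℝ => Real.exp (-x^2 / Real.sin ψ ^ 2)) 0 := by
        fun_prop (disch := assumption)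
      have h5 : Tendsto (fun x : ℝ => Real.exp (-x^2 / Real.sin ψ ^ 2)) (𝓝[>] (0:ℝ))
          (𝓝 (Real.exp (-(0:ℝ)^2 / Real.sin ψ ^ 2))) :=
        hc.tendsto.mono_left nhdsWithin_le_nhds
      simpa using h5)
  have : (∫ _ in (0:ℝ)..(π/2), (1:ℝ)) = π/2 := by simp
  rwa [this] at hmain

theorem erf_craig' (z : ℝ) (hz : 0 < z) :
    (2 / Real.sqrt π) * (∫ t in (0:ℝ)..z, Real.exp (-t ^ 2))
      = 1 - (2 / π) * ∫ ψ in (0:ℝ)..(π / 2), Real.exp (-z ^ 2 / Real.sin ψ ^ 2) := by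
  set g : ℝ → ℝ := fun x => (2 / Real.sqrt π) * (∫ t in (0:ℝ)..x, Real.exp (-t ^ 2))
      + (2 / π) * ∫ ψ in (0:ℝ)..(π / 2), Real.exp (-x ^ 2 / Real.sin ψ ^ 2) with hg
  have hsq : Real.sqrt π * Real.sqrt π = π := Real.mul_self_sqrt Real.pi_pos.le
  have hsp : 0 < Real.sqrt π := Real.sqrt_pos.mpr Real.pi_pos
  have hgderiv : ∀ x : ℝ, 0 < x → HasDerivAt g 0 x := by
    intro x hx
    have h1 := erf_like_deriv x
    have h2 := (F_deriv hx).const_mul (2 / π)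
    have h3 := h1.add h2
    have hzero : 2 / Real.sqrt π * Real.exp (-x ^ 2)
        + 2 / π * (-Real.sqrt π * Real.exp (-x ^ 2)) = 0 := by
      field_simp
      nlinarith [Real.exp_pos (-x^2)]
    rwa [hzero] at h3
  have hconst : ∀ ε ∈ Set.Ioc (0:ℝ) z, g z = g ε := by
    intro ε hε
    have hcont : ContinuousOn g (Set.Icc ε z) := fun x hx =>
      ((hgderiv x (lt_of_lt_of_le hε.1 hx.1)).continuousAt).continuousWithinAt
    have hder : ∀ x ∈ Set.Ico ε z, HasDerivWithinAt g 0 (Set.Ici x) x := fun x hx =>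
      (hgderiv x (lt_of_lt_of_le hε.1 hx.1)).hasDerivWithinAt
    exact constant_of_has_deriv_right_zero hcont hder z (Set.right_mem_Icc.mpr hε.2)
  have hlim1 : Tendsto g (𝓝[>] (0:ℝ)) (𝓝 1) := by
    have hA : Tendsto (fun x : ℝ => (2 / Real.sqrt π) * ∫ t in (0:ℝ)..x, Real.exp (-t ^ 2))
        (𝓝[>] (0:ℝ)) (𝓝 0) := by
      have h5 : Tendsto (fun u : ℝ => (2 / Real.sqrt π) * ∫ t in (0:ℝ)..u, Real.exp (-t ^ 2))
          (𝓝[>] (0:ℝ)) (𝓝 ((2 / Real.sqrt π) * ∫ t in (0:ℝ)..(0:ℝ), Real.exp (-t ^ 2))) :=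
        (erf_like_deriv 0).continuousAt.tendsto.mono_left nhdsWithin_le_nhds
      simpa using h5
    have hB := F_cont0.const_mul (2 / π)
    have := hA.add hB
    have hval : (0:ℝ) + 2 / π * (π/2) = 1 := by
      field_simp
      norm_num
    rwa [hval] at this
  have hlim2 : Tendsto g (𝓝[>] (0:ℝ)) (𝓝 (g z)) := by
    apply Tendsto.congr' _ tendsto_const_nhds
    filter_upwards [Ioc_mem_nhdsGT hz] with ε hε
    exact hconst ε hε
  have hgz : g z = 1 := tendsto_nhds_unique hlim2 hlim1
  have := hgz
  rw [hg] at this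
  simp only at this
  linarith [this]

/-- The error function. -/
noncomputable def erf (x : ℝ) : ℝ := (2 / Real.sqrt π) * ∫ t in (0:ℝ)..x, Real.exp (-t ^ 2)

/-- Craig-type representation of the error function. -/
theorem erf_craig (z : ℝ) (hz : 0 ≤ z) :
    erf z = 1 - (2 / π) * ∫ ψ in (0:ℝ)..(π / 2), Real.exp (-z ^ 2 / Real.sin ψ ^ 2) := by
  rcases hz.eq_or_lt with h | h
  · rw [← h]
    have h0 : erf 0 = 0 := by simp [erf]
    rw [h0]
    have hint : (fun ψ : ℝ => Real.exp (-(0:ℝ) ^ 2 / Real.sin ψ ^ 2)) = fun _ => (1:ℝ) := by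
      funext ψ; norm_num
    rw [hint]
    simp only [intervalIntegral.integral_const, smul_eq_mul, sub_zero, mul_one]
    field_simp
    norm_num
  · have := erf_craig' z h
    rw [erf]
    exact this
end

section
/- Let G and V be independent random variables where G has density f_G(g) = 2g·e^{-g²} on g ≥ 0 (Rayleigh with scale 1/√2) and V has density L/(π√(1-v²)) on [cos(π/L), 1] with integer L ≥ 3. Then the product X = G·V has density f_X(x) = (L/√π)·e^{-x²}·erf(x·tan(π/L)) for x ≥ 0. -/
open MeasureTheory Real Set ProbabilityTheory

/-- The Rayleigh density. -/
noncomputable def fG (g : ℝ) : ℝ := if 0 ≤ g then 2 * g * Real.exp (-g ^ 2) else 0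

/-- The density of `V`. -/
noncomputable def fV (L : ℕ) (v : ℝ) : ℝ :=
  if Real.cos (π / L) ≤ v ∧ v ≤ 1 then L / (π * Real.sqrt (1 - v ^ 2)) else 0

@[fun_prop] lemma measurable_fG : Measurable fG :=
  Measurable.ite measurableSet_Ici (by fun_prop) measurable_const

@[fun_prop] lemma measurable_fV (L : ℕ) : Measurable (fV L) :=
  Measurable.ite (measurableSet_Ici.inter measurableSet_Iic : MeasurableSet {v : ℝ | _ ∧ _})
    (by fun_prop) measurable_const

lemma fG_nonneg (g : ℝ) : 0 ≤ fG g := by unfold fG; split <;> positivity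
lemma fV_nonneg (L : ℕ) (v : ℝ) : 0 ≤ fV L v := by unfold fV; split <;> positivity
lemma fG_of_nonpos {g : ℝ} (h : g ≤ 0) : fG g = 0 := by
  unfold fG; split
  · have : g = 0 := le_antisymm h ‹0 ≤ g›
    simp [this]
  · rfl
lemma alpha_pos {L : ℕ} (hL : 3 ≤ L) : 0 < π / L := div_pos pi_pos (by positivity)
lemma alpha_lt {L : ℕ} (hL : 3 ≤ L) : π / L < π / 2 := by
  apply div_lt_div_of_pos_left pi_pos (by norm_num)
  exact_mod_cast by omega
lemma cos_alpha_pos {L : ℕ} (hL : 3 ≤ L) : 0 < Real.cos (π / L) :=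
  Real.cos_pos_of_mem_Ioo ⟨by linarith [alpha_pos hL, pi_pos], alpha_lt hL⟩
lemma cos_alpha_lt_one {L : ℕ} (hL : 3 ≤ L) : Real.cos (π / L) < 1 := by
  have := Real.cos_lt_cos_of_nonneg_of_le_pi le_rfl
    (le_of_lt ((alpha_lt hL).trans (by linarith [pi_pos]))) (alpha_pos hL)
  simpa using this
lemma sin_alpha_pos {L : ℕ} (hL : 3 ≤ L) : 0 < Real.sin (π / L) :=
  Real.sin_pos_of_pos_of_lt_pi (alpha_pos hL) (by linarith [alpha_lt hL, pi_pos])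
lemma tan_alpha_pos {L : ℕ} (hL : 3 ≤ L) : 0 < Real.tan (π / L) :=
  Real.tan_pos_of_pos_of_lt_pi_div_two (alpha_pos hL) (alpha_lt hL)

section keypos
variable {L : ℕ} (hL : 3 ≤ L) {x : ℝ} (hx : 0 < x)

lemma u_pos (hx : 0 < x) (t : ℝ) : 0 < x ^ 2 + t ^ 2 := by nlinarith [sq_nonneg t]

lemma phi_hasDeriv (hx : 0 < x) (t : ℝ) :
    HasDerivAt (fun t => x / Real.sqrt (x ^ 2 + t ^ 2))
      (-(x * t) / ((x ^ 2 + t ^ 2) * Real.sqrt (x ^ 2 + t ^ 2))) t := by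
  have hu := u_pos hx t
  have h1 : HasDerivAt (fun t : ℝ => x ^ 2 + t ^ 2) (2 * t) t := by
    simpa using (hasDerivAt_pow 2 t).const_add (x ^ 2)
  have h2 : HasDerivAt (fun t : ℝ => Real.sqrt (x ^ 2 + t ^ 2))
      (1 / (2 * Real.sqrt (x ^ 2 + t ^ 2)) * (2 * t)) t :=
    (Real.hasDerivAt_sqrt (ne_of_gt hu)).comp t h1
  have hs : Real.sqrt (x ^ 2 + t ^ 2) ≠ 0 := ne_of_gt (Real.sqrt_pos.mpr hu)
  have h3 := (hasDerivAt_const t x).div h2 hs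
  refine HasDerivAt.congr_deriv h3 ?_
  have hsq : Real.sqrt (x ^ 2 + t ^ 2) ^ 2 = x ^ 2 + t ^ 2 := Real.sq_sqrt hu.le
  rw [hsq]
  field_simp
  ring_nf

lemma phi_injOn (hx : 0 < x) (b : ℝ) :
    InjOn (fun t => x / Real.sqrt (x ^ 2 + t ^ 2)) (Ioo 0 b) := by
  intro s hs t ht h
  simp only at h
  have hus := u_pos hx s; have hut := u_pos hx t
  have hss := Real.sqrt_pos.mpr hus; have hst := Real.sqrt_pos.mpr hut
  field_simp at h
  have h := congrArg (· ^ 2) h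
  simp only [Real.sq_sqrt hus.le, Real.sq_sqrt hut.le] at h
  replace h : s ^ 2 = t ^ 2 := by linarith
  calc s = Real.sqrt (s ^ 2) := (Real.sqrt_sq hs.1.le).symm
    _ = Real.sqrt (t ^ 2) := by rw [h]
    _ = t := Real.sqrt_sq ht.1.le

lemma phi_image (hL : 3 ≤ L) (hx : 0 < x) :
    (fun t => x / Real.sqrt (x ^ 2 + t ^ 2)) '' (Ioo 0 (x * Real.tan (π / L)))
      = Ioo (Real.cos (π / L)) 1 := by
  have hc := cos_alpha_pos hL
  have hsin := sin_alpha_pos hL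
  have htan := tan_alpha_pos hL
  have hb : 0 < x * Real.tan (π / L) := mul_pos hx htan
  ext v
  constructor
  · rintro ⟨t, ⟨ht0, htb⟩, rfl⟩
    have hu := u_pos hx t
    have hs := Real.sqrt_pos.mpr hu
    constructor
    · rw [lt_div_iff₀ hs]
      have h1 : x ^ 2 + t ^ 2 < (x / Real.cos (π / L)) ^ 2 := by
        have : t ^ 2 < (x * Real.tan (π / L)) ^ 2 := by nlinarith
        have hpyth := Real.sin_sq_add_cos_sq (π / L)
        have h3 : (x * Real.tan (π / L)) ^ 2 * Real.cos (π / L) ^ 2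
            = x ^ 2 * Real.sin (π / L) ^ 2 := by
          rw [Real.tan_eq_sin_div_cos]; field_simp
        rw [div_pow, lt_div_iff₀ (by positivity)]
        nlinarith [mul_lt_mul_of_pos_right this (by positivity : (0:ℝ) < Real.cos (π / L) ^ 2)]
      have h2 : Real.sqrt (x ^ 2 + t ^ 2) < x / Real.cos (π / L) := by
        calc Real.sqrt (x ^ 2 + t ^ 2) < Real.sqrt ((x / Real.cos (π / L)) ^ 2) :=
              Real.sqrt_lt_sqrt (by positivity) h1
          _ = x / Real.cos (π / L) := Real.sqrt_sq (by positivity)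
      calc Real.cos (π / L) * Real.sqrt (x ^ 2 + t ^ 2)
          < Real.cos (π / L) * (x / Real.cos (π / L)) := by
            exact mul_lt_mul_of_pos_left h2 hc
        _ = x := by field_simp
    · rw [div_lt_one hs]
      calc x = Real.sqrt (x ^ 2) := (Real.sqrt_sq hx.le).symm
        _ < Real.sqrt (x ^ 2 + t ^ 2) := Real.sqrt_lt_sqrt (by positivity) (by nlinarith)
  · rintro ⟨hv1, hv2⟩
    have hv0 : 0 < v := hc.trans hv1
    have h1v : 0 < 1 - v ^ 2 := by nlinarith
    refine ⟨x * Real.sqrt (1 - v ^ 2) / v, ⟨by positivity, ?_⟩, ?_⟩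
    · have hs1 : Real.sqrt (1 - v ^ 2) < Real.sin (π / L) := by
        have : 1 - v ^ 2 < Real.sin (π / L) ^ 2 := by
          have hpyth := Real.sin_sq_add_cos_sq (π / L)
          nlinarith
        calc Real.sqrt (1 - v ^ 2) < Real.sqrt (Real.sin (π / L) ^ 2) :=
              Real.sqrt_lt_sqrt h1v.le this
          _ = Real.sin (π / L) := Real.sqrt_sq hsin.le
      rw [Real.tan_eq_sin_div_cos, mul_div_assoc]
      exact mul_lt_mul_of_pos_left
        ((div_lt_div_iff₀ hv0 hc).mpr (mul_lt_mul'' hs1 hv1 (Real.sqrt_nonneg _) hc.le)) hx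
    · have hteq : x ^ 2 + (x * Real.sqrt (1 - v ^ 2) / v) ^ 2 = (x / v) ^ 2 := by
        rw [div_pow, mul_pow, Real.sq_sqrt h1v.le]
        field_simp
        ring
      simp only [hteq]
      rw [Real.sqrt_sq (by positivity)]
      field_simp

lemma pointwise_jac (hL : 3 ≤ L) (hx : 0 < x) {t : ℝ} (ht : 0 < t) :
    |(-(x * t) / ((x ^ 2 + t ^ 2) * Real.sqrt (x ^ 2 + t ^ 2)))| •
      ((L : ℝ) / (π * Real.sqrt (1 - (x / Real.sqrt (x ^ 2 + t ^ 2)) ^ 2))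
        * (x / Real.sqrt (x ^ 2 + t ^ 2))⁻¹
        * fG (x / (x / Real.sqrt (x ^ 2 + t ^ 2))))
    = 2 * L / π * Real.exp (-x ^ 2) * Real.exp (-t ^ 2) := by
  have hu := u_pos hx t
  have hs := Real.sqrt_pos.mpr hu
  have hsq : Real.sqrt (x ^ 2 + t ^ 2) ^ 2 = x ^ 2 + t ^ 2 := Real.sq_sqrt hu.le
  have habs : |(-(x * t) / ((x ^ 2 + t ^ 2) * Real.sqrt (x ^ 2 + t ^ 2)))|
      = x * t / ((x ^ 2 + t ^ 2) * Real.sqrt (x ^ 2 + t ^ 2)) := by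
    rw [abs_div, abs_neg, abs_of_pos (mul_pos hx ht), abs_of_pos (mul_pos hu hs)]
  have h1 : x / (x / Real.sqrt (x ^ 2 + t ^ 2)) = Real.sqrt (x ^ 2 + t ^ 2) := by
    rw [div_div_eq_mul_div, mul_comm, mul_div_assoc, div_self (ne_of_gt hx), mul_one]
  have hfG : fG (x / (x / Real.sqrt (x ^ 2 + t ^ 2)))
      = 2 * Real.sqrt (x ^ 2 + t ^ 2) * Real.exp (-(x ^ 2 + t ^ 2)) := by
    rw [h1]; unfold fG; rw [if_pos hs.le, hsq]
  have h2 : 1 - (x / Real.sqrt (x ^ 2 + t ^ 2)) ^ 2 = t ^ 2 / (x ^ 2 + t ^ 2) := by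
    rw [div_pow, hsq]; field_simp; ring
  have h3 : Real.sqrt (t ^ 2 / (x ^ 2 + t ^ 2)) = t / Real.sqrt (x ^ 2 + t ^ 2) := by
    rw [Real.sqrt_div (sq_nonneg t), Real.sqrt_sq ht.le]
  have h4 : Real.exp (-x ^ 2) * Real.exp (-t ^ 2) = Real.exp (-(x ^ 2 + t ^ 2)) := by
    rw [← Real.exp_add]; ring_nf
  rw [habs, hfG, h2, h3, smul_eq_mul, mul_assoc (2 * (L:ℝ) / π), h4]
  generalize hE : Real.exp (-(x ^ 2 + t ^ 2)) = E
  field_simp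
  linear_combination E * hsq

lemma key_pos (hL : 3 ≤ L) (hx : 0 < x) :
    (∫⁻ v, ENNReal.ofReal (fV L v * v⁻¹ * fG (x / v)))
      = ENNReal.ofReal ((L / Real.sqrt π) * Real.exp (-x ^ 2)
          * erf (x * Real.tan (π / L))) := by
  have hc := cos_alpha_pos hL
  have hb : 0 < x * Real.tan (π / L) := mul_pos hx (tan_alpha_pos hL)
  set b := x * Real.tan (π / L) with hbdef
  set c := Real.cos (π / L) with hcdef
  set wt : ℝ → ℝ := fun v => (L : ℝ) / (π * Real.sqrt (1 - v ^ 2)) * v⁻¹ * fG (x / v)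
    with hwt
  set φ : ℝ → ℝ := fun t => x / Real.sqrt (x ^ 2 + t ^ 2) with hφ
  set φ' : ℝ → ℝ := fun t => -(x * t) / ((x ^ 2 + t ^ 2) * Real.sqrt (x ^ 2 + t ^ 2))
    with hφ'
  have hind : (fun v => fV L v * v⁻¹ * fG (x / v)) = (Icc c 1).indicator wt := by
    funext v
    by_cases h : v ∈ Icc c 1
    · rw [Set.indicator_of_mem h, hwt]
      unfold fV
      rw [if_pos (Set.mem_Icc.mp h)]
    · rw [Set.indicator_of_notMem h]
      unfold fV
      rw [if_neg (fun hc' => h (Set.mem_Icc.mpr hc'))]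
      ring
  have hder : ∀ t ∈ Ioo (0:ℝ) b, HasDerivWithinAt φ (φ' t) (Ioo 0 b) t :=
    fun t _ => (phi_hasDeriv hx t).hasDerivWithinAt
  have hinj : InjOn φ (Ioo 0 b) := phi_injOn hx b
  have himg : φ '' Ioo 0 b = Ioo c 1 := phi_image hL hx
  have heq : EqOn (fun t => |φ' t| • wt (φ t))
      (fun t => 2 * L / π * Real.exp (-x ^ 2) * Real.exp (-t ^ 2)) (Ioo 0 b) :=
    fun t ht => pointwise_jac hL hx ht.1
  have hcont : Continuous fun t : ℝ => 2 * L / π * Real.exp (-x ^ 2) * Real.exp (-t ^ 2) := by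
    fun_prop
  have hInt2 : IntegrableOn (fun t => |φ' t| • wt (φ t)) (Ioo 0 b) :=
    ((hcont.integrableOn_Icc (a := 0) (b := b)).mono_set Ioo_subset_Icc_self).congr_fun
      heq.symm measurableSet_Ioo
  have hIntwt : IntegrableOn wt (Ioo c 1) := by
    rw [← himg]
    exact (integrableOn_image_iff_integrableOn_abs_deriv_smul measurableSet_Ioo hder hinj
      wt).mpr hInt2
  have hIntW : Integrable (fun v => fV L v * v⁻¹ * fG (x / v)) := by
    rw [hind]
    exact (integrable_indicator_iff measurableSet_Icc).mpr
      ((integrableOn_Icc_iff_integrableOn_Ioo).mpr hIntwt)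
  have hnn : ∀ v, 0 ≤ fV L v * v⁻¹ * fG (x / v) := by
    intro v
    by_cases h : c ≤ v ∧ v ≤ 1
    · have hv0 : 0 < v := lt_of_lt_of_le hc h.1
      exact mul_nonneg (mul_nonneg (fV_nonneg _ _) (inv_nonneg.mpr hv0.le)) (fG_nonneg _)
    · unfold fV
      rw [if_neg h]
      simp
  rw [← ofReal_integral_eq_lintegral_ofReal hIntW (Filter.Eventually.of_forall hnn)]
  congr 1
  calc (∫ v, fV L v * v⁻¹ * fG (x / v))
      = ∫ v, (Icc c 1).indicator wt v := by rw [hind]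
    _ = ∫ v in Icc c 1, wt v := integral_indicator measurableSet_Icc
    _ = ∫ v in Ioo c 1, wt v := integral_Icc_eq_integral_Ioo
    _ = ∫ v in φ '' Ioo 0 b, wt v := by rw [himg]
    _ = ∫ t in Ioo 0 b, |φ' t| • wt (φ t) :=
        integral_image_eq_integral_abs_deriv_smul measurableSet_Ioo hder hinj wt
    _ = ∫ t in Ioo 0 b, 2 * L / π * Real.exp (-x ^ 2) * Real.exp (-t ^ 2) :=
        setIntegral_congr_fun measurableSet_Ioo heq
    _ = 2 * L / π * Real.exp (-x ^ 2) * ∫ t in Ioo 0 b, Real.exp (-t ^ 2) :=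
        integral_const_mul _ _
    _ = 2 * L / π * Real.exp (-x ^ 2) * ∫ t in (0:ℝ)..b, Real.exp (-t ^ 2) := by
        rw [intervalIntegral.integral_of_le hb.le, integral_Ioc_eq_integral_Ioo]
    _ = (L / Real.sqrt π) * Real.exp (-x ^ 2) * erf b := by
        rw [erf]
        have hππ : Real.sqrt π * Real.sqrt π = π := Real.mul_self_sqrt pi_pos.le
        have hπ : Real.sqrt π ≠ 0 := by positivity
        rw [show (L:ℝ) / Real.sqrt π * Real.exp (-x ^ 2)
            * (2 / Real.sqrt π * ∫ t in (0:ℝ)..b, Real.exp (-t ^ 2))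
          = 2 * L / (Real.sqrt π * Real.sqrt π) * Real.exp (-x ^ 2)
            * ∫ t in (0:ℝ)..b, Real.exp (-t ^ 2) by ring, hππ]

end keypos

lemma key_lintegral (L : ℕ) (hL : 3 ≤ L) (x : ℝ) :
    (∫⁻ v, ENNReal.ofReal (fV L v) * ENNReal.ofReal v⁻¹ * ENNReal.ofReal (fG (x / v))) =
      ENNReal.ofReal (if 0 ≤ x then
        (L / Real.sqrt π) * Real.exp (-x ^ 2) * erf (x * Real.tan (π / L)) else 0) := by
  have hsplit : ∀ v : ℝ, ENNReal.ofReal (fV L v) * ENNReal.ofReal v⁻¹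
      * ENNReal.ofReal (fG (x / v)) = ENNReal.ofReal (fV L v * v⁻¹ * fG (x / v)) := by
    intro v
    rcases le_or_gt 0 v with h | h
    · rw [ENNReal.ofReal_mul (mul_nonneg (fV_nonneg L v) (inv_nonneg.mpr h)),
        ENNReal.ofReal_mul (fV_nonneg L v)]
    · have h1 : fV L v = 0 := by
        unfold fV
        rw [if_neg]
        rintro ⟨h2, -⟩
        linarith [cos_alpha_pos hL]
      simp [h1]
  simp_rw [hsplit]
  rcases lt_trichotomy x 0 with hx | hx | hx
  · rw [if_neg (not_le.mpr hx)]
    have hzero : ∀ v : ℝ, fV L v * v⁻¹ * fG (x / v) = 0 := by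
      intro v
      by_cases h : Real.cos (π / L) ≤ v ∧ v ≤ 1
      · have hv0 : 0 < v := lt_of_lt_of_le (cos_alpha_pos hL) h.1
        rw [fG_of_nonpos (le_of_lt (div_neg_of_neg_of_pos hx hv0)), mul_zero]
      · unfold fV
        rw [if_neg h]
        ring
    simp_rw [hzero]
    simp
  · subst hx
    rw [if_pos le_rfl]
    have hzero : ∀ v : ℝ, fV L v * v⁻¹ * fG (0 / v) = 0 := by
      intro v
      rw [zero_div, fG_of_nonpos le_rfl, mul_zero]
    have herf : erf (0 * Real.tan (π / L)) = 0 := by simp [erf]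
    simp_rw [hzero, herf, mul_zero]
    simp
  · rw [if_pos hx.le]
    exact key_pos hL hx

lemma prod_withDensity_aux (L : ℕ)
    [SigmaFinite (volume.withDensity fun g => ENNReal.ofReal (fG g))]
    [SigmaFinite (volume.withDensity fun v => ENNReal.ofReal (fV L v))] :
    (volume.withDensity fun g => ENNReal.ofReal (fG g)).prod
      (volume.withDensity fun v => ENNReal.ofReal (fV L v)) =
    (volume.prod volume).withDensity
      (fun p => ENNReal.ofReal (fG p.1) * ENNReal.ofReal (fV L p.2)) := by
  refine Measure.prod_eq fun s t hs ht => ?_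
  rw [withDensity_apply _ (hs.prod ht), ← Measure.prod_restrict,
    lintegral_prod_mul (measurable_fG.ennreal_ofReal).aemeasurable
      ((measurable_fV L).ennreal_ofReal).aemeasurable,
    withDensity_apply _ hs, withDensity_apply _ ht]

theorem product_density_rayleigh_cos {Ω : Type*} [MeasurableSpace Ω] (μ : Measure Ω)
    [IsProbabilityMeasure μ] (L : ℕ) (hL : 3 ≤ L) (G V : Ω → ℝ)
    (hG : Measurable G) (hV : Measurable V) (hindep : IndepFun G V μ)
    (hGd : Measure.map G μ = volume.withDensity (fun g => ENNReal.ofReal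
      (if 0 ≤ g then 2 * g * Real.exp (-g ^ 2) else 0)))
    (hVd : Measure.map V μ = volume.withDensity (fun v => ENNReal.ofReal
      (if Real.cos (π / L) ≤ v ∧ v ≤ 1 then L / (π * Real.sqrt (1 - v ^ 2)) else 0))) :
    Measure.map (fun ω => G ω * V ω) μ = volume.withDensity (fun x => ENNReal.ofReal
      (if 0 ≤ x then (L / Real.sqrt π) * Real.exp (-x ^ 2) * erf (x * Real.tan (π / L))
       else 0)) := by
  have hGd' : Measure.map G μ = volume.withDensity fun g => ENNReal.ofReal (fG g) := hGd
  have hVd' : Measure.map V μ = volume.withDensity fun v => ENNReal.ofReal (fV L v) := hVd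
  haveI : IsProbabilityMeasure (volume.withDensity fun g => ENNReal.ofReal (fG g)) := by
    rw [← hGd']; exact Measure.isProbabilityMeasure_map hG.aemeasurable
  haveI : IsProbabilityMeasure (volume.withDensity fun v => ENNReal.ofReal (fV L v)) := by
    rw [← hVd']; exact Measure.isProbabilityMeasure_map hV.aemeasurable
  have hm : Measurable fun p : ℝ × ℝ => p.1 * p.2 := measurable_fst.mul measurable_snd
  have h1 : Measure.map (fun ω => G ω * V ω) μ
      = Measure.map (fun p : ℝ × ℝ => p.1 * p.2) (μ.map (fun ω => (G ω, V ω))) := by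
    rw [Measure.map_map hm (hG.prodMk hV)]; rfl
  have hpair : μ.map (fun ω => (G ω, V ω)) = (μ.map G).prod (μ.map V) :=
    (indepFun_iff_map_prod_eq_prod_map_map hG.aemeasurable hV.aemeasurable).mp hindep
  rw [h1, hpair, hGd', hVd', prod_withDensity_aux L]
  refine Measure.ext fun s hs => ?_
  rw [Measure.map_apply hm hs, withDensity_apply _ (hm hs), withDensity_apply _ hs]
  have e1 : (∫⁻ p in ((fun p : ℝ × ℝ => p.1 * p.2) ⁻¹' s),
        ENNReal.ofReal (fG p.1) * ENNReal.ofReal (fV L p.2) ∂(volume.prod volume))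
      = ∫⁻ p : ℝ × ℝ, ENNReal.ofReal (fG p.1) * ENNReal.ofReal (fV L p.2)
          * s.indicator 1 (p.1 * p.2) ∂(volume.prod volume) := by
    rw [← lintegral_indicator (hm hs)]
    refine lintegral_congr fun p => ?_
    by_cases h : p.1 * p.2 ∈ s <;>
      simp [Set.indicator_apply, Set.mem_preimage, h]
  have hind : Measurable fun p : ℝ × ℝ =>
      ENNReal.ofReal (fG p.1) * ENNReal.ofReal (fV L p.2) * s.indicator 1 (p.1 * p.2) :=
    ((measurable_fG.ennreal_ofReal.comp measurable_fst).mul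
      ((measurable_fV L).ennreal_ofReal.comp measurable_snd)).mul
      ((measurable_one.indicator hs).comp hm)
  rw [e1, lintegral_prod_symm _ hind.aemeasurable]
  have e3 : ∀ v : ℝ, (∫⁻ g, ENNReal.ofReal (fG g) * ENNReal.ofReal (fV L v)
        * s.indicator 1 (g * v))
      = ∫⁻ x in s, ENNReal.ofReal (fV L v) * ENNReal.ofReal v⁻¹ * ENNReal.ofReal (fG (x / v)) := by
    intro v
    by_cases hv : fV L v = 0
    · simp [hv]
    · have hvpos : 0 < v := by
        by_contra hle
        push_neg at hle
        apply hv
        unfold fV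
        rw [if_neg]
        rintro ⟨h1, -⟩
        exact absurd (lt_of_lt_of_le (cos_alpha_pos hL) h1) (not_lt.mpr hle)
      have hΦ : Measurable fun x : ℝ => ENNReal.ofReal (fG (x / v)) * s.indicator 1 x := by
        apply Measurable.mul
        · fun_prop
        · exact measurable_const.indicator hs
      calc (∫⁻ g, ENNReal.ofReal (fG g) * ENNReal.ofReal (fV L v) * s.indicator 1 (g * v))
          = ∫⁻ g, ENNReal.ofReal (fV L v)
              * ((fun x => ENNReal.ofReal (fG (x / v)) * s.indicator 1 x) (g * v)) := by
            refine lintegral_congr fun g => ?_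
            simp only [mul_div_cancel_right₀ _ (ne_of_gt hvpos)]
            ring
        _ = ENNReal.ofReal (fV L v)
              * ∫⁻ g, (fun x => ENNReal.ofReal (fG (x / v)) * s.indicator 1 x) (g * v) :=
            lintegral_const_mul' _ _ ENNReal.ofReal_ne_top
        _ = ENNReal.ofReal (fV L v) * ∫⁻ x, ENNReal.ofReal (fG (x / v)) * s.indicator 1 x
              ∂(Measure.map (fun g => g * v) volume) := by
            rw [lintegral_map hΦ (measurable_mul_const v)]
        _ = ENNReal.ofReal (fV L v) * (ENNReal.ofReal |v⁻¹|
              * ∫⁻ x, ENNReal.ofReal (fG (x / v)) * s.indicator 1 x) := by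
            rw [Real.map_volume_mul_right (ne_of_gt hvpos), lintegral_smul_measure, smul_eq_mul]
        _ = ENNReal.ofReal (fV L v) * (ENNReal.ofReal v⁻¹
              * ∫⁻ x in s, ENNReal.ofReal (fG (x / v))) := by
            rw [abs_of_pos (inv_pos.mpr hvpos)]
            congr 2
            rw [← lintegral_indicator hs]
            refine lintegral_congr fun x => ?_
            by_cases h : x ∈ s <;> simp [Set.indicator_apply, h]
        _ = ∫⁻ x in s, ENNReal.ofReal (fV L v) * ENNReal.ofReal v⁻¹
              * ENNReal.ofReal (fG (x / v)) := by
            rw [← mul_assoc, ← lintegral_const_mul' _ _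
              (ENNReal.mul_ne_top ENNReal.ofReal_ne_top ENNReal.ofReal_ne_top)]
  simp_rw [e3]
  rw [lintegral_lintegral_swap (by fun_prop : Measurable (Function.uncurry fun (v x : ℝ) =>
      ENNReal.ofReal (fV L v) * ENNReal.ofReal v⁻¹ * ENNReal.ofReal (fG (x / v)))).aemeasurable]
  exact lintegral_congr fun x => key_lintegral L hL x
end

section
/- For every integer L ≥ 3, ∫_0^∞ [ L·e^{-2z} - (2L/π) ∫_0^{π/2} exp(-2z·√(1 + tan(π/L)²/sin(ψ)²)) dψ ] dz = 1, i.e., the function f_Z is a probability density on [0, ∞). -/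
open MeasureTheory Real

lemma integral_exp_neg_mul_Ioi' {b : ℝ} (hb : 0 < b) :
    ∫ x in Set.Ioi (0:ℝ), Real.exp (-b * x) = 1 / b := by
  have h := integral_exp_neg_mul_rpow one_pos hb
  simp_rw [Real.rpow_one] at h
  rw [h]
  norm_num [Real.Gamma_two, Real.rpow_neg_one]

lemma aux_psi_integral {θ : ℝ} (hθpos : 0 < θ) (hθlt : θ < π / 2) :
    ∫ ψ in Set.Ioc (0:ℝ) (π/2), 1 / (2 * Real.sqrt (1 + Real.tan θ ^ 2 / Real.sin ψ ^ 2))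
      = (1/2) * (π/2 - θ) := by
  have hπ : (0:ℝ) < π := Real.pi_pos
  set t : ℝ := Real.tan θ with ht_def
  have ht : 0 < t := Real.tan_pos_of_pos_of_lt_pi_div_two hθpos hθlt
  set a : ℝ := Real.sqrt (1 + t^2) with ha_def
  have ha0 : 0 < a := Real.sqrt_pos.2 (by positivity)
  have ha2 : a ^ 2 = 1 + t ^ 2 := Real.sq_sqrt (by positivity)
  have ha1 : 1 < a := by nlinarith
  have hYpos : ∀ ψ : ℝ, 0 < 1 + t^2 - Real.cos ψ ^ 2 := by
    intro ψ
    have := Real.cos_sq_le_one ψ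
    nlinarith
  -- step A: rewrite integrand
  have hA : ∫ ψ in Set.Ioc (0:ℝ) (π/2), 1 / (2 * Real.sqrt (1 + t ^ 2 / Real.sin ψ ^ 2))
      = ∫ ψ in Set.Ioc (0:ℝ) (π/2), Real.sin ψ / (2 * Real.sqrt (1 + t^2 - Real.cos ψ ^ 2)) := by
    apply setIntegral_congr_fun measurableSet_Ioc
    intro ψ hψ
    show 1 / (2 * Real.sqrt (1 + t ^ 2 / Real.sin ψ ^ 2))
      = Real.sin ψ / (2 * Real.sqrt (1 + t^2 - Real.cos ψ ^ 2))
    have hs : 0 < Real.sin ψ :=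
      Real.sin_pos_of_pos_of_lt_pi hψ.1 (lt_of_le_of_lt hψ.2 (by linarith))
    have hsq : Real.sin ψ ^ 2 = 1 - Real.cos ψ ^ 2 := Real.sin_sq ψ
    have h1 : 1 + t ^ 2 / Real.sin ψ ^ 2 = (1 + t^2 - Real.cos ψ ^ 2) / Real.sin ψ ^ 2 := by
      field_simp
      nlinarith
    rw [h1, Real.sqrt_div (hYpos ψ).le, Real.sqrt_sq hs.le]
    have hY : 0 < Real.sqrt (1 + t^2 - Real.cos ψ ^ 2) := Real.sqrt_pos.2 (hYpos ψ)
    field_simp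
  rw [hA, ← intervalIntegral.integral_of_le (by positivity)]
  -- step B: FTC
  have hcont : Continuous fun ψ => Real.sin ψ / (2 * Real.sqrt (1 + t^2 - Real.cos ψ ^ 2)) := by
    apply Real.continuous_sin.div
    · exact continuous_const.mul (Real.continuous_sqrt.comp (by continuity))
    · intro ψ
      have := Real.sqrt_pos.2 (hYpos ψ)
      positivity
  have hderiv : ∀ ψ ∈ Set.uIcc (0:ℝ) (π/2),
      HasDerivAt (fun ψ => -(1/2) * Real.arcsin (Real.cos ψ / a))
        (Real.sin ψ / (2 * Real.sqrt (1 + t^2 - Real.cos ψ ^ 2))) ψ := by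
    intro ψ _
    have hxabs : |Real.cos ψ / a| < 1 := by
      rw [abs_div, abs_of_pos ha0, div_lt_one ha0]
      calc |Real.cos ψ| ≤ 1 := Real.abs_cos_le_one ψ
        _ < a := ha1
    have hne1 : Real.cos ψ / a ≠ -1 := by
      intro h; rw [h] at hxabs; norm_num at hxabs
    have hne2 : Real.cos ψ / a ≠ 1 := by
      intro h; rw [h] at hxabs; norm_num at hxabs
    have hd1 : HasDerivAt (fun ψ => Real.cos ψ / a) (-Real.sin ψ / a) ψ :=
      (Real.hasDerivAt_cos ψ).div_const a
    have hd2 := (Real.hasDerivAt_arcsin hne1 hne2).comp ψ hd1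
    have hd3 := hd2.const_mul (-(1/2) : ℝ)
    refine hd3.congr_deriv ?_
    have hkey : Real.sqrt (1 - (Real.cos ψ / a)^2)
        = Real.sqrt (1 + t^2 - Real.cos ψ ^ 2) / a := by
      have h1 : 1 - (Real.cos ψ / a)^2 = (1 + t^2 - Real.cos ψ ^ 2) / a^2 := by
        field_simp
        nlinarith
      rw [h1, Real.sqrt_div (hYpos ψ).le, Real.sqrt_sq ha0.le]
    have hY : 0 < Real.sqrt (1 + t^2 - Real.cos ψ ^ 2) := Real.sqrt_pos.2 (hYpos ψ)
    rw [hkey]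
    field_simp
  rw [intervalIntegral.integral_eq_sub_of_hasDerivAt hderiv
    (hcont.intervalIntegrable _ _)]
  -- evaluate endpoints
  have hcosθ : 0 < Real.cos θ := Real.cos_pos_of_mem_Ioo ⟨by linarith, hθlt⟩
  have hinv : a⁻¹ = Real.cos θ := by
    rw [ha_def, ht_def]
    exact Real.inv_sqrt_one_add_tan_sq hcosθ
  have harc : Real.arcsin (Real.cos θ) = π/2 - θ := by
    rw [← Real.sin_pi_div_two_sub]
    exact Real.arcsin_sin (by linarith) (by linarith)
  rw [Real.cos_pi_div_two, Real.cos_zero, zero_div, Real.arcsin_zero]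
  rw [show (1:ℝ)/a = a⁻¹ by ring, hinv, harc]
  ring

theorem density_integrates_to_one (L : ℕ) (hL : 3 ≤ L) :
    ∫ z in Set.Ioi (0:ℝ),
        (L * Real.exp (-2 * z) - (2 * L / π) * ∫ ψ in (0:ℝ)..(π / 2),
          Real.exp (-2 * z * Real.sqrt (1 + Real.tan (π / L) ^ 2 / Real.sin ψ ^ 2)))
      = 1 := by
  have hπ : (0:ℝ) < π := Real.pi_pos
  have hL3 : (3:ℝ) ≤ (L:ℝ) := by exact_mod_cast hL
  have hLpos : (0:ℝ) < L := by linarith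
  set t : ℝ := Real.tan (π / L) with ht_def
  have hθpos : 0 < π / L := by positivity
  have hθlt : π / L < π / 2 := by
    apply div_lt_div_of_pos_left hπ (by norm_num)
    linarith
  have ht : 0 < t := Real.tan_pos_of_pos_of_lt_pi_div_two hθpos hθlt
  set c : ℝ → ℝ := fun ψ => Real.sqrt (1 + t ^ 2 / Real.sin ψ ^ 2) with hc_def
  have hc1 : ∀ ψ, 1 ≤ c ψ := by
    intro ψ
    rw [hc_def]
    rw [show (1:ℝ) = Real.sqrt 1 by simp]
    apply Real.sqrt_le_sqrt
    have : 0 ≤ t ^ 2 / Real.sin ψ ^ 2 := by positivity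
    simp; linarith
  -- rewrite interval integral as set integral
  have hiv : ∀ z : ℝ, (∫ ψ in (0:ℝ)..(π / 2), Real.exp (-2 * z * c ψ))
      = ∫ ψ in Set.Ioc (0:ℝ) (π/2), Real.exp (-2 * z * c ψ) := fun z =>
    intervalIntegral.integral_of_le (by positivity)
  simp_rw [show ∀ ψ, Real.sqrt (1 + t^2/Real.sin ψ^2) = c ψ from fun _ => rfl, hiv]
  -- integrability on the product
  set μ := volume.restrict (Set.Ioi (0:ℝ))
  set ν := volume.restrict (Set.Ioc (0:ℝ) (π/2))
  have hmeas : Measurable (fun p : ℝ × ℝ => Real.exp (-2 * p.1 * c p.2)) := by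
    apply Real.measurable_exp.comp
    apply Measurable.mul
    · exact (measurable_const.mul measurable_fst)
    · exact (Real.continuous_sqrt.measurable.comp
        ((measurable_const.div ((Real.measurable_sin.comp measurable_snd).pow_const 2)).const_add 1))
  have hF : Integrable (fun p : ℝ × ℝ => Real.exp (-2 * p.1 * c p.2)) (μ.prod ν) := by
    apply Integrable.mono (g := fun p : ℝ × ℝ => Real.exp (-2 * p.1))
    · have h1 : Integrable (fun z : ℝ => Real.exp (-2 * z)) μ :=
        exp_neg_integrableOn_Ioi 0 (by norm_num)
      have h2 : Integrable (fun _ : ℝ => (1:ℝ)) ν := by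
        apply integrable_const
      simpa using h1.mul_prod h2
    · exact hmeas.aestronglyMeasurable
    · rw [Measure.prod_restrict]
      filter_upwards [ae_restrict_mem (measurableSet_Ioi.prod measurableSet_Ioc)] with p hp
      obtain ⟨hz, hψ⟩ := hp
      rw [Real.norm_eq_abs, Real.norm_eq_abs, Real.abs_exp, Real.abs_exp]
      apply Real.exp_le_exp.2
      have := hc1 p.2
      have hz' : (0:ℝ) < p.1 := hz
      nlinarith
  have hswap : ∫ z in Set.Ioi (0:ℝ), ∫ ψ in Set.Ioc (0:ℝ) (π/2), Real.exp (-2 * z * c ψ)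
      = ∫ ψ in Set.Ioc (0:ℝ) (π/2), ∫ z in Set.Ioi (0:ℝ), Real.exp (-2 * z * c ψ) :=
    integral_integral_swap hF
  -- inner z-integral
  have hinner : ∀ ψ, (∫ z in Set.Ioi (0:ℝ), Real.exp (-2 * z * c ψ)) = 1 / (2 * c ψ) := by
    intro ψ
    have hcpos : 0 < c ψ := lt_of_lt_of_le one_pos (hc1 ψ)
    rw [show (fun z => Real.exp (-2 * z * c ψ)) = fun z => Real.exp (-(2 * c ψ) * z) by
      funext z; ring_nf]
    exact integral_exp_neg_mul_Ioi' (by positivity)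
  -- the ψ integral
  have hψint : ∫ ψ in Set.Ioc (0:ℝ) (π/2), 1 / (2 * c ψ) = (1/2) * (π/2 - π/L) :=
    aux_psi_integral hθpos hθlt
  -- split the integral
  have int1 : Integrable (fun z : ℝ => (L:ℝ) * Real.exp (-2 * z)) μ :=
    (exp_neg_integrableOn_Ioi 0 (by norm_num : (0:ℝ) < 2)).const_mul _
  have int2 : Integrable
      (fun z : ℝ => (2 * L / π) * ∫ ψ in Set.Ioc (0:ℝ) (π/2), Real.exp (-2 * z * c ψ)) μ :=
    (hF.integral_prod_left).const_mul _
  rw [integral_sub int1 int2, integral_const_mul, integral_const_mul, hswap]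
  simp_rw [hinner]
  rw [hψint]
  have e1 : ∫ z in Set.Ioi (0:ℝ), Real.exp (-2 * z) = 1/2 := by
    have := integral_exp_neg_mul_Ioi' (b := 2) (by norm_num)
    simpa using this
  rw [e1]
  field_simp
  ring
end

section
/- For every integer N ≥ 1 and ρ > 0: (1/2)∫_0^∞ erfc(√(ρ g)) · (2^{N-1} g^{N/2-1} e^{-2√g} / Γ(N)) dg ≤ (2^{N-1} Γ(N/2 + 1/2) / (√π Γ(N+1))) · ρ^{-N/2} · (1 + o(1)) as ρ → ∞; more precisely lim_{ρ→∞} ρ^{N/2} · (1/2)∫_0^∞ erfc(√(ρg)) f_γ(g) dg = 2^{N-1} Γ(N/2 + 1/2)/(√π Γ(N+1)). -/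
open MeasureTheory Real Filter

/-- The complementary error function. -/
noncomputable def erfc (x : ℝ) : ℝ := 1 - erf x

lemma hasDerivAt_erf (y : ℝ) : HasDerivAt erf (2 / Real.sqrt π * Real.exp (-y ^ 2)) y := by
  have hc : Continuous fun t : ℝ => Real.exp (-t ^ 2) := by continuity
  have h : HasDerivAt (fun x => ∫ t in (0:ℝ)..x, Real.exp (-t ^ 2)) (Real.exp (-y ^ 2)) y :=
    (intervalIntegral.integral_hasStrictDerivAt_right (hc.intervalIntegrable _ _)
      (hc.stronglyMeasurableAtFilter _ _) hc.continuousAt).hasDerivAt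
  exact h.const_mul (2 / Real.sqrt π)

lemma continuous_erf : Continuous erf :=
  continuous_iff_continuousAt.mpr fun y => (hasDerivAt_erf y).continuousAt

lemma gauss_integrableOn (c : ℝ) : IntegrableOn (fun t : ℝ => Real.exp (-t ^ 2)) (Set.Ioi c) := by
  have := (integrable_exp_neg_mul_sq (one_pos)).integrableOn (s := Set.Ioi c)
  refine this.congr_fun (fun x _ => by norm_num) measurableSet_Ioi

lemma gauss_Ioi_zero : (∫ t in Set.Ioi (0:ℝ), Real.exp (-t ^ 2)) = Real.sqrt π / 2 := by
  have := integral_gaussian_Ioi 1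
  simp only [neg_mul, one_mul, div_one] at this
  exact this

lemma sqrt_pi_pos : (0:ℝ) < Real.sqrt π := Real.sqrt_pos.mpr Real.pi_pos

lemma erfc_eq_integral {y : ℝ} (hy : 0 ≤ y) :
    erfc y = 2 / Real.sqrt π * ∫ t in Set.Ioi y, Real.exp (-t ^ 2) := by
  have key : (∫ t in Set.Ioc 0 y, Real.exp (-t ^ 2)) + ∫ t in Set.Ioi y, Real.exp (-t ^ 2)
      = ∫ t in Set.Ioi (0:ℝ), Real.exp (-t ^ 2) := by
    rw [← Set.Ioc_union_Ioi_eq_Ioi hy]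
    exact (setIntegral_union (Set.Ioc_disjoint_Ioi le_rfl) measurableSet_Ioi
      ((gauss_integrableOn 0).mono_set Set.Ioc_subset_Ioi_self) (gauss_integrableOn y)).symm
  have hB : (∫ t in Set.Ioi y, Real.exp (-t ^ 2))
      = Real.sqrt π / 2 - ∫ t in Set.Ioc 0 y, Real.exp (-t ^ 2) := by
    rw [← gauss_Ioi_zero]; linarith
  rw [erfc, erf, intervalIntegral.integral_of_le hy, hB]
  have hπ := sqrt_pi_pos.ne'
  field_simp

lemma erf_nonneg {y : ℝ} (hy : 0 ≤ y) : 0 ≤ erf y :=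
  mul_nonneg (by positivity)
    (intervalIntegral.integral_nonneg hy (fun t _ => (Real.exp_pos _).le))

lemma erfc_le_one {y : ℝ} (hy : 0 ≤ y) : erfc y ≤ 1 := by
  have := erf_nonneg hy; simp [erfc]; linarith

lemma erfc_nonneg {y : ℝ} (hy : 0 ≤ y) : 0 ≤ erfc y := by
  rw [erfc_eq_integral hy]
  exact mul_nonneg (by positivity) (setIntegral_nonneg measurableSet_Ioi
    (fun t _ => (Real.exp_pos _).le))

lemma erfc_sqrt_le {x : ℝ} (hx : 0 ≤ x) :
    erfc (Real.sqrt x) ≤ Real.sqrt 2 * Real.exp (-x / 2) := by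
  rw [erfc_eq_integral (Real.sqrt_nonneg x)]
  have hint2 : IntegrableOn (fun t : ℝ => Real.exp (-x / 2) * Real.exp (-(1/2) * t ^ 2))
      (Set.Ioi (Real.sqrt x)) :=
    ((integrable_exp_neg_mul_sq (by norm_num : (0:ℝ) < 1/2)).integrableOn).const_mul _
  have h1 : (∫ t in Set.Ioi (Real.sqrt x), Real.exp (-t ^ 2))
      ≤ ∫ t in Set.Ioi (Real.sqrt x), Real.exp (-x / 2) * Real.exp (-(1/2) * t ^ 2) := by
    refine setIntegral_mono_on (gauss_integrableOn _) hint2 measurableSet_Ioi (fun t ht => ?_)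
    rw [← Real.exp_add]
    apply Real.exp_le_exp.mpr
    have h2 : x ≤ t ^ 2 := by
      have := Real.sqrt_le_sqrt (le_of_lt ht) -- no
      nlinarith [Real.sq_sqrt hx, Real.sqrt_nonneg x, Set.mem_Ioi.mp ht]
    nlinarith
  have h3 : (∫ t in Set.Ioi (Real.sqrt x), Real.exp (-x / 2) * Real.exp (-(1/2) * t ^ 2))
      = Real.exp (-x / 2) * ∫ t in Set.Ioi (Real.sqrt x), Real.exp (-(1/2) * t ^ 2) :=
    integral_const_mul _ _
  have h4 : (∫ t in Set.Ioi (Real.sqrt x), Real.exp (-(1/2) * t ^ 2))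
      ≤ ∫ t in Set.Ioi (0:ℝ), Real.exp (-(1/2) * t ^ 2) := by
    refine setIntegral_mono_set ((integrable_exp_neg_mul_sq (by norm_num : (0:ℝ) < 1/2)).integrableOn)
      (Filter.Eventually.of_forall fun t => (Real.exp_pos _).le)
      (HasSubset.Subset.eventuallyLE (Set.Ioi_subset_Ioi (Real.sqrt_nonneg x)))
  have h5 : (∫ t in Set.Ioi (0:ℝ), Real.exp (-(1/2) * t ^ 2)) = Real.sqrt (π / (1/2)) / 2 :=
    integral_gaussian_Ioi (1/2)
  have hπ := sqrt_pi_pos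
  have hval : Real.sqrt (π / (1/2)) = Real.sqrt 2 * Real.sqrt π := by
    rw [show π / (1/2 : ℝ) = 2 * π by ring, Real.sqrt_mul (by norm_num) π]
  have h6 : (∫ t in Set.Ioi (Real.sqrt x), Real.exp (-t ^ 2))
      ≤ Real.exp (-x / 2) * (Real.sqrt (π / (1/2)) / 2) :=
    h1.trans (by rw [h3]; exact mul_le_mul_of_nonneg_left (h5 ▸ h4) (Real.exp_pos _).le)
  calc 2 / Real.sqrt π * ∫ t in Set.Ioi (Real.sqrt x), Real.exp (-t ^ 2)
      ≤ 2 / Real.sqrt π * (Real.exp (-x / 2) * (Real.sqrt (π / (1/2)) / 2)) :=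
        mul_le_mul_of_nonneg_left h6 (by positivity)
    _ = Real.sqrt 2 * Real.exp (-x / 2) := by rw [hval]; field_simp

lemma continuous_erfc : Continuous erfc := continuous_const.sub continuous_erf

lemma continuousOn_rpow_Ioi (r : ℝ) : ContinuousOn (fun x : ℝ => x ^ r) (Set.Ioi 0) :=
  fun x hx => (Real.continuousAt_rpow_const x r (Or.inl (ne_of_gt hx))).continuousWithinAt

lemma erfc_sqrt_rpow_integrable {s : ℝ} (hs : 0 < s) :
    IntegrableOn (fun x => erfc (Real.sqrt x) * x ^ (s - 1)) (Set.Ioi (0:ℝ)) := by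
  have hbase : IntegrableOn (fun x : ℝ => x ^ (s - 1) * Real.exp (-(1/2) * x)) (Set.Ioi 0) := by
    have h := integrableOn_rpow_mul_exp_neg_mul_rpow (p := 1) (s := s - 1) (b := 1/2)
      (by linarith) (by norm_num) (by norm_num)
    exact h.congr_fun (fun x hx => by simp only [Real.rpow_one]) measurableSet_Ioi
  refine Integrable.mono' (hbase.const_mul (Real.sqrt 2)) ?_ ?_
  · exact ((continuous_erfc.comp Real.continuous_sqrt).continuousOn.mul
      (continuousOn_rpow_Ioi (s - 1))).aestronglyMeasurable measurableSet_Ioi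
  · rw [ae_restrict_iff' measurableSet_Ioi]
    refine Filter.Eventually.of_forall fun x hx => ?_
    have hx0 : (0:ℝ) < x := hx
    have h1 : 0 ≤ erfc (Real.sqrt x) := erfc_nonneg (Real.sqrt_nonneg x)
    have h2 : (0:ℝ) ≤ x ^ (s - 1) := Real.rpow_nonneg hx0.le _
    rw [Real.norm_eq_abs, abs_of_nonneg (mul_nonneg h1 h2)]
    calc erfc (Real.sqrt x) * x ^ (s - 1)
        ≤ (Real.sqrt 2 * Real.exp (-x / 2)) * x ^ (s - 1) :=
          mul_le_mul_of_nonneg_right (erfc_sqrt_le hx0.le) h2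
      _ = Real.sqrt 2 * (x ^ (s - 1) * Real.exp (-(1/2) * x)) := by
          rw [show -x / 2 = -(1/2) * x by ring]; ring

lemma erfc_integral {s : ℝ} (hs : 0 < s) :
    ∫ x in Set.Ioi (0:ℝ), erfc (Real.sqrt x) * x ^ (s - 1)
      = Real.Gamma (s + 1/2) / (s * Real.sqrt π) := by
  have hπ := sqrt_pi_pos
  set u : ℝ → ℝ := fun x => erfc (Real.sqrt x) with hu_def
  set u' : ℝ → ℝ := fun x => -(Real.exp (-x) / (Real.sqrt π * Real.sqrt x)) with hu'_def
  set v : ℝ → ℝ := fun x => x ^ s / s with hv_def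
  set v' : ℝ → ℝ := fun x => x ^ (s - 1) with hv'_def
  have hu : ∀ x ∈ Set.Ioi (0:ℝ), HasDerivAt u (u' x) x := by
    intro x hx
    have hx0 : (0:ℝ) < x := hx
    have h1 : HasDerivAt (fun y => erf (Real.sqrt y))
        (2 / Real.sqrt π * Real.exp (-x) * (1 / (2 * Real.sqrt x))) x := by
      have := (hasDerivAt_erf (Real.sqrt x)).comp x (Real.hasDerivAt_sqrt hx0.ne')
      simpa [Real.sq_sqrt hx0.le, Function.comp_def] using this
    have h2 := h1.const_sub 1
    have hsx : Real.sqrt x ≠ 0 := (Real.sqrt_pos.mpr hx0).ne'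
    have h3 : u' x = -(2 / Real.sqrt π * Real.exp (-x) * (1 / (2 * Real.sqrt x))) := by
      simp only [hu'_def]
      field_simp
    rw [h3]
    exact h2
  have hv : ∀ x ∈ Set.Ioi (0:ℝ), HasDerivAt v (v' x) x := by
    intro x hx
    have hx0 : (0:ℝ) < x := hx
    have h := (Real.hasDerivAt_rpow_const (x := x) (p := s) (Or.inl hx0.ne')).div_const s
    have : s * x ^ (s - 1) / s = x ^ (s - 1) := by
      field_simp
    simpa [hv_def, hv'_def, this] using h
  have huv' : IntegrableOn (u * v') (Set.Ioi (0:ℝ)) := erfc_sqrt_rpow_integrable hs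
  have hcongr : ∀ x ∈ Set.Ioi (0:ℝ),
      (-(1 / (s * Real.sqrt π))) * (Real.exp (-x) * x ^ (s + 1/2 - 1)) = u' x * v x := by
    intro x hx
    have hx0 : (0:ℝ) < x := hx
    have hsx : Real.sqrt x ≠ 0 := (Real.sqrt_pos.mpr hx0).ne'
    have hxs : x ^ (s + 1/2 - 1) = x ^ s / Real.sqrt x := by
      rw [show s + 1/2 - 1 = s - 1/2 by ring, Real.rpow_sub hx0,
        Real.sqrt_eq_rpow]
    rw [hxs]
    simp only [hu'_def, hv_def]
    field_simp
  have hu'v : IntegrableOn (u' * v) (Set.Ioi (0:ℝ)) := by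
    have hint : IntegrableOn (fun x => Real.exp (-x) * x ^ (s + 1/2 - 1)) (Set.Ioi (0:ℝ)) :=
      Real.GammaIntegral_convergent (by linarith)
    have h2 : IntegrableOn (fun x => -(1 / (s * Real.sqrt π)) * (Real.exp (-x) * x ^ (s + 1/2 - 1)))
        (Set.Ioi (0:ℝ)) := hint.const_mul _
    exact h2.congr_fun hcongr measurableSet_Ioi
  have h_zero : Tendsto (u * v) (nhdsWithin 0 (Set.Ioi 0)) (nhds 0) := by
    have hg : Tendsto v (nhdsWithin 0 (Set.Ioi 0)) (nhds 0) := by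
      have hc : ContinuousAt (fun x : ℝ => x ^ s) 0 :=
        Real.continuousAt_rpow_const 0 s (Or.inr hs.le)
      have h2 : Tendsto v (nhdsWithin 0 (Set.Ioi 0)) (nhds ((0:ℝ) ^ s / s)) :=
        ((hc.tendsto.div_const s).mono_left (nhdsWithin_le_nhds (s := Set.Ioi 0)))
      simpa [hv_def, Real.zero_rpow hs.ne'] using h2
    refine squeeze_zero' ?_ ?_ hg
    · filter_upwards [self_mem_nhdsWithin] with x hx
      exact mul_nonneg (erfc_nonneg (Real.sqrt_nonneg x))
        (div_nonneg (Real.rpow_nonneg (le_of_lt hx) _) hs.le)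
    · filter_upwards [self_mem_nhdsWithin] with x hx
      exact mul_le_of_le_one_left
        (div_nonneg (Real.rpow_nonneg (le_of_lt hx) _) hs.le)
        (erfc_le_one (Real.sqrt_nonneg x))
  have h_infty : Tendsto (u * v) atTop (nhds 0) := by
    have hg : Tendsto (fun x : ℝ => (Real.sqrt 2 / s) * (x ^ s * Real.exp (-(1/2) * x)))
        atTop (nhds 0) := by
      have := (tendsto_rpow_mul_exp_neg_mul_atTop_nhds_zero s (1/2) (by norm_num)).const_mul
        (Real.sqrt 2 / s)
      simpa using this
    refine squeeze_zero' ?_ ?_ hg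
    · filter_upwards [eventually_gt_atTop 0] with x hx
      exact mul_nonneg (erfc_nonneg (Real.sqrt_nonneg x))
        (div_nonneg (Real.rpow_nonneg hx.le _) hs.le)
    · filter_upwards [eventually_gt_atTop 0] with x hx
      have h1 : u x * v x ≤ (Real.sqrt 2 * Real.exp (-x / 2)) * v x :=
        mul_le_mul_of_nonneg_right (erfc_sqrt_le hx.le)
          (div_nonneg (Real.rpow_nonneg hx.le _) hs.le)
      refine h1.trans (le_of_eq ?_)
      simp only [hv_def]
      rw [show -x / 2 = -(1/2) * x by ring]
      ring
  have key := MeasureTheory.integral_Ioi_mul_deriv_eq_deriv_mul hu hv huv' hu'v h_zero h_infty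
  have hval : (∫ x in Set.Ioi (0:ℝ), u' x * v x)
      = -(1 / (s * Real.sqrt π)) * Real.Gamma (s + 1/2) := by
    rw [← setIntegral_congr_fun measurableSet_Ioi hcongr, integral_const_mul,
      ← Real.Gamma_eq_integral (by linarith : (0:ℝ) < s + 1/2)]
  have : (∫ x in Set.Ioi (0:ℝ), u x * v' x) = 0 - 0 - ∫ x in Set.Ioi (0:ℝ), u' x * v x := key
  rw [hval] at this
  simpa [div_eq_mul_inv, mul_comm, mul_assoc, mul_left_comm] using this

theorem high_snr_ber_L2 (N : ℕ) (hN : 1 ≤ N) :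
    Tendsto (fun ρ : ℝ => ρ ^ ((N : ℝ) / 2) *
        ((1 / 2) * ∫ g in Set.Ioi (0:ℝ), erfc (Real.sqrt (ρ * g)) *
          (2 ^ (N - 1) * g ^ ((N : ℝ) / 2 - 1) * Real.exp (-2 * Real.sqrt g) / Real.Gamma N)))
      atTop
      (nhds (2 ^ (N - 1) * Real.Gamma ((N : ℝ) / 2 + 1 / 2)
        / (Real.sqrt π * Real.Gamma ((N : ℝ) + 1)))) := by
  have hN0 : (0:ℝ) < (N:ℝ) := by exact_mod_cast hN
  set s : ℝ := (N : ℝ) / 2 with hs_def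
  have hs : 0 < s := by positivity
  have hπ := sqrt_pi_pos
  have hΓ : 0 < Real.Gamma (N:ℝ) := Real.Gamma_pos_of_pos hN0
  set c : ℝ := 2 ^ (N - 1) / Real.Gamma (N:ℝ) with hc_def
  set I : ℝ → ℝ := fun ρ => ∫ u in Set.Ioi (0:ℝ),
      erfc (Real.sqrt u) * u ^ (s - 1) * Real.exp (-2 * Real.sqrt (u / ρ)) with hI_def
  -- Step B : dominated convergence
  have lim : Tendsto I atTop
      (nhds (∫ u in Set.Ioi (0:ℝ), erfc (Real.sqrt u) * u ^ (s - 1))) := by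
    apply tendsto_integral_filter_of_dominated_convergence
      (bound := fun u => erfc (Real.sqrt u) * u ^ (s - 1))
    · refine Filter.Eventually.of_forall fun ρ => ?_
      refine ContinuousOn.aestronglyMeasurable ?_ measurableSet_Ioi
      exact ((continuous_erfc.comp Real.continuous_sqrt).continuousOn.mul
        (continuousOn_rpow_Ioi (s - 1))).mul
        ((by fun_prop : Continuous fun u : ℝ => Real.exp (-2 * Real.sqrt (u / ρ))).continuousOn)
    · refine Filter.Eventually.of_forall fun ρ => ?_
      rw [ae_restrict_iff' measurableSet_Ioi]
      refine Filter.Eventually.of_forall fun x hx => ?_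
      have hx0 : (0:ℝ) < x := hx
      have h1 : 0 ≤ erfc (Real.sqrt x) := erfc_nonneg (Real.sqrt_nonneg x)
      have h2 : (0:ℝ) ≤ x ^ (s - 1) := Real.rpow_nonneg hx0.le _
      have h3 : Real.exp (-2 * Real.sqrt (x / ρ)) ≤ 1 := by
        rw [Real.exp_le_one_iff]
        have := Real.sqrt_nonneg (x / ρ); nlinarith
      rw [Real.norm_eq_abs, abs_of_nonneg (by positivity)]
      calc erfc (Real.sqrt x) * x ^ (s - 1) * Real.exp (-2 * Real.sqrt (x / ρ))
          ≤ erfc (Real.sqrt x) * x ^ (s - 1) * 1 :=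
            mul_le_mul_of_nonneg_left h3 (mul_nonneg h1 h2)
        _ = erfc (Real.sqrt x) * x ^ (s - 1) := mul_one _
    · exact erfc_sqrt_rpow_integrable hs
    · rw [ae_restrict_iff' measurableSet_Ioi]
      refine Filter.Eventually.of_forall fun x hx => ?_
      have h1 : Tendsto (fun ρ : ℝ => x / ρ) atTop (nhds 0) :=
        tendsto_const_nhds.div_atTop tendsto_id
      have h2 : Tendsto (fun ρ : ℝ => Real.exp (-2 * Real.sqrt (x / ρ))) atTop (nhds 1) := by
        have h4 : Tendsto (fun ρ : ℝ => -2 * Real.sqrt (x / ρ)) atTop (nhds 0) := by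
          have := ((Real.continuous_sqrt.tendsto 0).comp h1).const_mul (-2)
          simpa using this
        have h5 := (Real.continuous_exp.tendsto 0).comp h4
        simpa [Function.comp_def] using h5
      have := tendsto_const_nhds (x := erfc (Real.sqrt x) * x ^ (s - 1)) (f := atTop (α := ℝ)) |>.mul h2
      simpa using this
  -- Step A : change of variables
  have key : ∀ ρ : ℝ, 0 < ρ → ρ ^ ((N : ℝ) / 2) *
        ((1 / 2) * ∫ g in Set.Ioi (0:ℝ), erfc (Real.sqrt (ρ * g)) *
          (2 ^ (N - 1) * g ^ ((N : ℝ) / 2 - 1) * Real.exp (-2 * Real.sqrt g) / Real.Gamma N))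
      = 1 / 2 * c * I ρ := by
    intro ρ hρ
    have hρ0 : ρ ≠ 0 := hρ.ne'
    set F : ℝ → ℝ := fun u => erfc (Real.sqrt u) *
      (2 ^ (N - 1) * (u / ρ) ^ (s - 1) * Real.exp (-2 * Real.sqrt (u / ρ)) / Real.Gamma N)
      with hF_def
    have h1 : (∫ g in Set.Ioi (0:ℝ), erfc (Real.sqrt (ρ * g)) *
          (2 ^ (N - 1) * g ^ ((N : ℝ) / 2 - 1) * Real.exp (-2 * Real.sqrt g) / Real.Gamma N))
        = ∫ g in Set.Ioi (0:ℝ), F (ρ * g) := by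
      refine setIntegral_congr_fun measurableSet_Ioi fun g _ => ?_
      simp only [hF_def, mul_div_cancel_left₀ g hρ0, hs_def]
    have h2 : (∫ g in Set.Ioi (0:ℝ), F (ρ * g)) = ρ⁻¹ * ∫ u in Set.Ioi (0:ℝ), F u := by
      have := MeasureTheory.integral_comp_mul_left_Ioi F 0 hρ
      simpa [mul_zero, smul_eq_mul] using this
    have h3 : (∫ u in Set.Ioi (0:ℝ), F u) = (ρ ^ (s - 1))⁻¹ * (c * I ρ) := by
      rw [hI_def, ← integral_const_mul, ← integral_const_mul]
      refine setIntegral_congr_fun measurableSet_Ioi fun u hu => ?_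
      have hu0 : (0:ℝ) < u := hu
      simp only [hF_def]
      have hdiv : (u / ρ) ^ (s - 1) = u ^ (s - 1) / ρ ^ (s - 1) :=
        Real.div_rpow hu0.le hρ.le _
      rw [hdiv, hc_def]
      field_simp
    rw [h1, h2, h3]
    have hρs : (0:ℝ) < ρ ^ (s - 1) := Real.rpow_pos_of_pos hρ _
    have hρs2 : (0:ℝ) < ρ ^ s := Real.rpow_pos_of_pos hρ _
    have hsub : ρ ^ (s - 1) = ρ ^ s / ρ := by
      rw [Real.rpow_sub hρ, Real.rpow_one]
    rw [← hs_def, hsub]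
    field_simp
  -- combine
  have heq : 1 / 2 * c * (Real.Gamma (s + 1/2) / (s * Real.sqrt π))
      = 2 ^ (N - 1) * Real.Gamma ((N : ℝ) / 2 + 1 / 2)
        / (Real.sqrt π * Real.Gamma ((N : ℝ) + 1)) := by
    rw [Real.Gamma_add_one hN0.ne', hc_def, hs_def]
    field_simp
  have final : Tendsto (fun ρ : ℝ => 1 / 2 * c * I ρ) atTop
      (nhds (2 ^ (N - 1) * Real.Gamma ((N : ℝ) / 2 + 1 / 2)
        / (Real.sqrt π * Real.Gamma ((N : ℝ) + 1)))) := by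
    have := lim.const_mul (1 / 2 * c)
    rwa [erfc_integral hs, heq] at this
  refine final.congr' ?_
  filter_upwards [eventually_gt_atTop (0:ℝ)] with ρ hρ
  exact (key ρ hρ).symm
end
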